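/- Let p, q ≥ 1 be integers with p ≠ q, and let w be a holomorphic function on a neighborhood of 0 in ℂ with w(0) ≠ 0. Define φ : ℂ → ℂ by φ(t) = t^p · conj(t^q · w(t)), where conj denotes complex conjugation. Then there exists δ > 0 such that for every t with 0 < |t| < δ, the Fréchet derivative over ℝ of φ at t (viewing ℂ as a real vector space) is surjective; i.e., φ is a submersion on a punctured neighborhood of 0. -/

import Mathlib

open Metric Function

lemma surj_aux_stmt9 (a b : ℂ) (h : ‖a‖ ≠ ‖b‖) :
    Function.Surjective (fun v : ℂ => a * v + b * (starRingEnd ℂ) v) := by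
  have hd : (Complex.normSq a : ℝ) - Complex.normSq b ≠ 0 := by
    intro hc
    apply h
    have : Complex.normSq a = Complex.normSq b := by linarith
    rw [Complex.norm_def, Complex.norm_def, this]
  have hd' : ((Complex.normSq a : ℝ) - Complex.normSq b : ℂ) ≠ 0 := by
    simpa [sub_eq_zero] using fun hc => hd (by exact_mod_cast sub_eq_zero.mpr hc)
  intro c
  refine ⟨((starRingEnd ℂ) a * c - b * (starRingEnd ℂ) c) / ((Complex.normSq a : ℝ) - Complex.normSq b : ℂ), ?_⟩
  have hconj : (starRingEnd ℂ) ((((starRingEnd ℂ) a * c - b * (starRingEnd ℂ) c)) / ((Complex.normSq a : ℝ) - Complex.normSq b : ℂ))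
      = (a * (starRingEnd ℂ) c - (starRingEnd ℂ) b * c) / ((Complex.normSq a : ℝ) - Complex.normSq b : ℂ) := by
    rw [map_div₀, map_sub, map_mul, map_mul, Complex.conj_conj, Complex.conj_conj]
    congr 1
    simp [Complex.ext_iff]
  beta_reduce
  rw [hconj]
  field_simp
  linear_combination c * Complex.mul_conj a - c * Complex.mul_conj b

/-- For `p ≠ q` and `w` holomorphic near `0` with `w 0 ≠ 0`, the map
`φ(t) = tᵖ · conj(t^q · w t)` is a real submersion on a punctured neighbourhood
of the origin. -/
theorem stmt_9 (p q : ℕ) (hp : 1 ≤ p) (hq : 1 ≤ q) (hpq : p ≠ q)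
    (V : Set ℂ) (hV : IsOpen V) (h0V : (0 : ℂ) ∈ V)
    (w : ℂ → ℂ) (hw : AnalyticOnNhd ℂ w V) (hw0 : w 0 ≠ 0) :
    ∃ δ > 0, ∀ t : ℂ, t ≠ 0 → ‖t‖ < δ →
      Function.Surjective
        (fderiv ℝ (fun t : ℂ => t ^ p * (starRingEnd ℂ) (t ^ q * w t)) t) := by
  have hw' : AnalyticOnNhd ℂ (deriv w) V := hw.deriv
  -- the continuous "discriminant" function
  set F : ℂ → ℝ := fun t => (p : ℝ) * ‖w t‖ - ‖(q : ℂ) * w t + t * deriv w t‖ with hF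
  have hFc : ContinuousAt F 0 := by
    have h1 : ContinuousAt w 0 := ((hw 0 h0V).differentiableAt).continuousAt
    have h2 : ContinuousAt (deriv w) 0 := ((hw' 0 h0V).differentiableAt).continuousAt
    fun_prop
  have hF0 : F 0 ≠ 0 := by
    have : F 0 = (p : ℝ) * ‖w 0‖ - (q : ℝ) * ‖w 0‖ := by
      simp [hF, norm_mul]
    rw [this]
    have hwpos : 0 < ‖w 0‖ := norm_pos_iff.mpr hw0
    have : (p : ℝ) ≠ (q : ℝ) := by exact_mod_cast hpq
    intro hc
    apply this
    have := sub_eq_zero.mp hc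
    exact mul_right_cancel₀ (ne_of_gt hwpos) this
  have hev : ∀ᶠ t in nhds (0 : ℂ), F t ≠ 0 ∧ t ∈ V :=
    (hFc.eventually_ne hF0).and (hV.mem_nhds h0V)
  rw [Metric.eventually_nhds_iff] at hev
  obtain ⟨δ, hδpos, hδ⟩ := hev
  refine ⟨δ, hδpos, fun t ht htδ => ?_⟩
  have htmem : F t ≠ 0 ∧ t ∈ V := hδ (by simpa [dist_zero_right] using htδ)
  obtain ⟨hFt, htV⟩ := htmem
  -- compute the derivative
  have hG : HasDerivAt (fun s : ℂ => s ^ q * w s)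
      ((q : ℂ) * t ^ (q - 1) * w t + t ^ q * deriv w t) t :=
    (hasDerivAt_pow q t).mul ((hw t htV).differentiableAt.hasDerivAt)
  set g' : ℂ := (q : ℂ) * t ^ (q - 1) * w t + t ^ q * deriv w t with hg'
  have hG2 : HasFDerivAt (fun s : ℂ => (starRingEnd ℂ) (s ^ q * w s))
      ((Complex.conjCLE.toContinuousLinearMap).comp
        ((ContinuousLinearMap.smulRight (1 : ℂ →L[ℂ] ℂ) g').restrictScalars ℝ)) t :=
    (Complex.conjCLE.toContinuousLinearMap.hasFDerivAt).comp t
      (hG.hasFDerivAt.restrictScalars ℝ)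
  have hFd : HasFDerivAt (fun s : ℂ => s ^ p)
      ((ContinuousLinearMap.smulRight (1 : ℂ →L[ℂ] ℂ) ((p : ℂ) * t ^ (p - 1))).restrictScalars ℝ) t :=
    (hasDerivAt_pow p t).hasFDerivAt.restrictScalars ℝ
  have hmul := hFd.mul hG2
  rw [show (fun t : ℂ => t ^ p * (starRingEnd ℂ) (t ^ q * w t)) = ((fun s : ℂ => s ^ p) * fun s => (starRingEnd ℂ) (s ^ q * w s)) from rfl, hmul.fderiv]
  -- the derivative is v ↦ a v + b conj v
  set a : ℂ := (p : ℂ) * t ^ (p - 1) * (starRingEnd ℂ) (t ^ q * w t) with ha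
  set b : ℂ := t ^ p * (starRingEnd ℂ) g' with hb
  have hnorm : ‖a‖ ≠ ‖b‖ := by
    have htq : t ^ q = t ^ (q - 1) * t := by
      rw [← pow_succ, Nat.sub_add_cancel hq]
    have hgfac : g' = t ^ (q - 1) * ((q : ℂ) * w t + t * deriv w t) := by
      rw [hg', htq]; ring
    have hna : ‖a‖ = ‖t‖ ^ (p - 1) * ‖t‖ ^ q * ((p : ℝ) * ‖w t‖) := by
      rw [ha]
      simp [norm_mul, norm_pow, Complex.norm_natCast]
      ring
    have hexp : (p - 1) + q = p + (q - 1) := by omega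
    have hnb : ‖b‖ = ‖t‖ ^ (p - 1) * ‖t‖ ^ q * ‖(q : ℂ) * w t + t * deriv w t‖ := by
      have h1 : ‖b‖ = ‖t‖ ^ p * (‖t‖ ^ (q - 1) * ‖(q : ℂ) * w t + t * deriv w t‖) := by
        rw [hb, hgfac, norm_mul, RCLike.norm_conj, norm_mul, norm_pow, norm_pow]
      rw [h1, ← mul_assoc, ← pow_add, ← hexp, pow_add]
    rw [hna, hnb]
    have hpos : (0 : ℝ) < ‖t‖ ^ (p - 1) * ‖t‖ ^ q := by
      have : (0 : ℝ) < ‖t‖ := norm_pos_iff.mpr ht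
      positivity
    intro hc
    apply hFt
    have := mul_left_cancel₀ (ne_of_gt hpos) hc
    rw [hF]
    simp only [this, sub_self]
  intro c
  obtain ⟨v, hv⟩ := surj_aux_stmt9 a b hnorm c
  refine ⟨v, ?_⟩
  rw [← hv]
  simp only [ContinuousLinearMap.add_apply, ContinuousLinearMap.coe_smul',
    Pi.smul_apply, ContinuousLinearMap.coe_comp', Function.comp_apply,
    ContinuousLinearMap.coe_restrictScalars', ContinuousLinearMap.smulRight_apply,
    ContinuousLinearMap.one_apply, ContinuousLinearEquiv.coe_coe, smul_eq_mul,
    Complex.conjCLE_apply, map_mul, ha, hb]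
  ring
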